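/- Let α, β, γ, c be real numbers with α > 0, γ ≠ 0 and β + c > 0, and take A = 0 in the system (★). If (φ, ψ) : ℝ → ℝ² is a nonconstant solution of (★) with lim_{y→±∞} φ(y) = 0 and lim_{y→±∞} ψ(y) = 0, then there exists y₀ ∈ ℝ such that φ(y) = −(3(β+c)/γ) · sech²( (1/2)·√((β+c)/α) · (y − y₀) ) for all y ∈ ℝ. -/

import Mathlib

open Real Filter Set Metric

/-- The hyperbolic secant `sech x = 1 / cosh x`. -/
noncomputable def sech (x : ℝ) : ℝ := 1 / Real.cosh x

lemma key_id (P a g m k s ch : ℝ) (ha : a ≠ 0) (hg : g ≠ 0) (hch : ch ≠ 0)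
    (hs : s ^ 2 = ch ^ 2 - 1) (hk : k ^ 2 = P / (4 * a)) (hm : g * m = -(3 * P)) :
    (P * (m * (ch ^ 2)⁻¹) + g / 2 * (m * (ch ^ 2)⁻¹) ^ 2) / a
      = -(2 * m * k) * (ch * k * (ch ^ 3)⁻¹ +
        s * (-((3:ℝ) * ch ^ 2 * (s * k)) / (ch ^ 3) ^ 2)) := by
  have hk' : 4*a*k^2 = P := by rw [hk]; field_simp
  field_simp
  linear_combination m*hm + (m*(ch^2 - 3*s^2))*hk' + (-3*P*m)*hs

lemma lip_aux (α β γ R : ℝ) (hα : 0 < α) (hβc : 0 < β) (hR0 : 0 ≤ R) :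
    LipschitzOnWith (1 + (β + |γ| * R) / α).toNNReal
      (fun p : ℝ × ℝ => (p.2, (β * p.1 + γ / 2 * p.1 ^ 2) / α))
      (Metric.closedBall 0 R) := by
  have hC0 : 0 ≤ (β + |γ| * R) / α := div_nonneg (by positivity) hα.le
  have hK0 : 0 ≤ 1 + (β + |γ| * R) / α := by linarith
  rw [lipschitzOnWith_iff_dist_le_mul]
  intro p hp q hq
  rw [Real.coe_toNNReal _ hK0]
  have hd0 : (0 : ℝ) ≤ dist p q := dist_nonneg
  have hp' := mem_closedBall_zero_iff.mp hp
  have hq' := mem_closedBall_zero_iff.mp hq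
  rw [Prod.norm_def] at hp' hq'
  simp only [Real.norm_eq_abs] at hp' hq'
  have hp1 : |p.1| ≤ R := le_trans (le_max_left _ _) hp'
  have hq1 : |q.1| ≤ R := le_trans (le_max_left _ _) hq'
  have hd1 : |p.1 - q.1| ≤ dist p q := by
    have h := le_max_left (dist p.1 q.1) (dist p.2 q.2)
    rw [← Prod.dist_eq, Real.dist_eq] at h
    exact h
  rw [Prod.dist_eq]
  apply max_le
  · have h : dist p.2 q.2 ≤ dist p q := by
      rw [Prod.dist_eq]; exact le_max_right _ _
    calc dist p.2 q.2 ≤ 1 * dist p q := by rwa [one_mul]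
      _ ≤ (1 + (β + |γ| * R) / α) * dist p q := by nlinarith
  · have key : (β * p.1 + γ / 2 * p.1 ^ 2) / α - (β * q.1 + γ / 2 * q.1 ^ 2) / α
        = (β + γ / 2 * (p.1 + q.1)) * (p.1 - q.1) / α := by
      field_simp
      ring
    have h1 : |β + γ / 2 * (p.1 + q.1)| ≤ β + |γ| * R := by
      calc |β + γ / 2 * (p.1 + q.1)| ≤ |β| + |γ / 2 * (p.1 + q.1)| := abs_add_le _ _
        _ = β + |γ| / 2 * |p.1 + q.1| := by
            rw [abs_of_pos hβc, abs_mul, abs_div, abs_two]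
        _ ≤ β + |γ| / 2 * (2 * R) := by
            gcongr
            calc |p.1 + q.1| ≤ |p.1| + |q.1| := abs_add_le _ _
              _ ≤ 2 * R := by linarith
        _ = β + |γ| * R := by ring
    calc dist ((β * p.1 + γ / 2 * p.1 ^ 2) / α) ((β * q.1 + γ / 2 * q.1 ^ 2) / α)
        = |(β + γ / 2 * (p.1 + q.1)) * (p.1 - q.1) / α| := by
          rw [Real.dist_eq]
          exact congrArg abs key
      _ = |β + γ / 2 * (p.1 + q.1)| * |p.1 - q.1| / α := by
          rw [abs_div, abs_mul, abs_of_pos hα]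
      _ ≤ (β + |γ| * R) * dist p q / α := by
          gcongr
      _ = ((β + |γ| * R) / α) * dist p q := by ring
      _ ≤ (1 + (β + |γ| * R) / α) * dist p q := by nlinarith

theorem stmt_13 (α β γ c : ℝ) (hα : 0 < α) (hγ : γ ≠ 0) (hβc : 0 < β + c)
    (φ ψ : ℝ → ℝ)
    (hφ : ∀ y : ℝ, HasDerivAt φ (ψ y) y)
    (hψ : ∀ y : ℝ, HasDerivAt ψ (((β + c) * φ y + γ / 2 * (φ y) ^ 2) / α) y)
    (hnc : ¬ ∀ y z : ℝ, (φ y, ψ y) = (φ z, ψ z))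
    (hφtop : Filter.Tendsto φ Filter.atTop (nhds 0))
    (hφbot : Filter.Tendsto φ Filter.atBot (nhds 0))
    (hψtop : Filter.Tendsto ψ Filter.atTop (nhds 0))
    (hψbot : Filter.Tendsto ψ Filter.atBot (nhds 0)) :
    ∃ y₀ : ℝ, ∀ y : ℝ, φ y =
      -(3 * (β + c) / γ) * sech ((1 / 2) * Real.sqrt ((β + c) / α) * (y - y₀)) ^ 2 := by
  have hαne : α ≠ 0 := ne_of_gt hα
  set m : ℝ := -(3 * (β + c) / γ) with hm
  set k : ℝ := Real.sqrt ((β + c) / α) / 2 with hk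
  have hdiv_pos : 0 < (β + c) / α := div_pos hβc hα
  have hk_pos : 0 < k := by rw [hk]; positivity
  have hk2 : k ^ 2 = (β + c) / (4 * α) := by
    rw [hk, div_pow, sq_sqrt hdiv_pos.le]; ring
  have hm_ne : m ≠ 0 := by
    rw [hm]
    intro h
    rw [neg_eq_zero, div_eq_zero_iff] at h
    rcases h with h | h
    · linarith
    · exact hγ h
  have hφcont : Continuous φ := continuous_iff_continuousAt.mpr fun y => (hφ y).continuousAt
  have hψcont : Continuous ψ := continuous_iff_continuousAt.mpr fun y => (hψ y).continuousAt
  -- Energy identity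
  set E : ℝ → ℝ := fun y => α * ψ y ^ 2 - (β + c) * φ y ^ 2 - γ / 3 * φ y ^ 3 with hEdef
  have hE : ∀ y, HasDerivAt E 0 y := by
    intro y
    have h1 := (((hψ y).pow 2).const_mul α)
    have h2 := (((hφ y).pow 2).const_mul (β + c))
    have h3 := (((hφ y).pow 3).const_mul (γ / 3))
    have h4 := (h1.sub h2).sub h3
    refine h4.congr_deriv (Eq.symm ?_)
    push_cast
    field_simp
    ring
  have hconst : ∀ y, E y = E 0 := fun y =>
    is_const_of_deriv_eq_zero (fun x => (hE x).differentiableAt)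
      (fun x => (hE x).deriv) y 0
  have hE0 : E 0 = 0 := by
    have hEtop : Tendsto E atTop (nhds (α * 0 ^ 2 - (β + c) * 0 ^ 2 - γ / 3 * 0 ^ 3)) :=
      (((hψtop.pow 2).const_mul α).sub ((hφtop.pow 2).const_mul (β + c))).sub
        ((hφtop.pow 3).const_mul (γ / 3))
    have h1 : Tendsto E atTop (nhds 0) := by simpa using hEtop
    have h2 : Tendsto E atTop (nhds (E 0)) :=
      tendsto_const_nhds.congr fun y => (hconst y).symm
    exact (tendsto_nhds_unique h2 h1)
  have energy : ∀ y, α * ψ y ^ 2 = (β + c) * φ y ^ 2 + γ / 3 * φ y ^ 3 := by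
    intro y
    have h := hconst y
    rw [hE0] at h
    simp only [hEdef] at h
    linarith
  -- a point where φ ≠ 0
  have hφne : ∃ y₁, φ y₁ ≠ 0 := by
    by_contra h
    push_neg at h
    apply hnc
    have hψ0 : ∀ y, ψ y = 0 := by
      intro y
      have h2 : HasDerivAt φ 0 y := by
        simp only [show φ = fun _ => (0 : ℝ) from funext h]
        exact hasDerivAt_const y 0
      exact (hφ y).unique h2
    intro y z
    simp [h, hψ0]
  -- critical points
  have hcrit : ∀ y, ψ y = 0 → φ y ≠ 0 → φ y = m := by
    intro y h0 hne
    have h2 : φ y ^ 2 * ((β + c) + γ / 3 * φ y) = 0 := by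
      have h3 := energy y
      rw [h0] at h3
      linear_combination -h3
    rcases mul_eq_zero.mp h2 with h | h
    · exact absurd (pow_eq_zero_iff two_ne_zero |>.mp h) hne
    · rw [hm]
      field_simp
      linarith
  have hφco : Tendsto φ (cocompact ℝ) (nhds 0) := by
    rw [cocompact_eq_atBot_atTop]
    exact tendsto_sup.mpr ⟨hφbot, hφtop⟩
  have hψco : Tendsto ψ (cocompact ℝ) (nhds 0) := by
    rw [cocompact_eq_atBot_atTop]
    exact tendsto_sup.mpr ⟨hψbot, hψtop⟩
  -- a point where φ attains the value m with ψ = 0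
  obtain ⟨ys, hψs, hφs⟩ : ∃ ys, ψ ys = 0 ∧ φ ys = m := by
    obtain ⟨y₁, hy₁⟩ := hφne
    rcases hy₁.lt_or_gt with hneg | hpos
    · obtain ⟨ys, hys⟩ := hφcont.exists_forall_le' y₁
        ((hφco.eventually_const_lt hneg).mono fun x h => h.le)
      have hmin : IsLocalMin φ ys := Filter.Eventually.of_forall hys
      have h0 : ψ ys = 0 := hmin.hasDerivAt_eq_zero (hφ ys)
      exact ⟨ys, h0, hcrit ys h0 (lt_of_le_of_lt (hys y₁) hneg).ne⟩
    · obtain ⟨ys, hys⟩ := hφcont.exists_forall_ge' y₁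
        ((hφco.eventually_lt_const hpos).mono fun x h => h.le)
      have hmax : IsLocalMax φ ys := Filter.Eventually.of_forall hys
      have h0 : ψ ys = 0 := hmax.hasDerivAt_eq_zero (hφ ys)
      exact ⟨ys, h0, hcrit ys h0 (lt_of_lt_of_le hpos (hys y₁)).ne'⟩
  -- the explicit solution
  set F : ℝ → ℝ := fun y => m * (Real.cosh (k * (y - ys)) ^ 2)⁻¹ with hFdef
  set G : ℝ → ℝ := fun y =>
    -(2 * m * k) * (Real.sinh (k * (y - ys)) * (Real.cosh (k * (y - ys)) ^ 3)⁻¹) with hGdef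
  have hcosh_ne : ∀ x : ℝ, Real.cosh x ≠ 0 := fun x => (Real.cosh_pos x).ne'
  have hu : ∀ y : ℝ, HasDerivAt (fun y => k * (y - ys)) k y := by
    intro y
    simpa using ((hasDerivAt_id y).sub_const ys).const_mul k
  have hch : ∀ y : ℝ, HasDerivAt (fun y => Real.cosh (k * (y - ys)))
      (Real.sinh (k * (y - ys)) * k) y := fun y =>
    (Real.hasDerivAt_cosh _).comp y (hu y)
  have hsh : ∀ y : ℝ, HasDerivAt (fun y => Real.sinh (k * (y - ys)))
      (Real.cosh (k * (y - ys)) * k) y := fun y =>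
    (Real.hasDerivAt_sinh _).comp y (hu y)
  have hF' : ∀ y, HasDerivAt F (G y) y := by
    intro y
    have h1 := (((hch y).pow 2).inv (pow_ne_zero 2 (hcosh_ne _))).const_mul m
    refine h1.congr_deriv (Eq.symm ?_)
    simp only [Pi.pow_apply]
    rw [hGdef]
    field_simp
    ring
  have hG' : ∀ y, HasDerivAt G (((β + c) * F y + γ / 2 * (F y) ^ 2) / α) y := by
    intro y
    have h1 := ((hsh y).mul (((hch y).pow 3).inv (pow_ne_zero 3 (hcosh_ne _)))).const_mul
      (-(2 * m * k))
    refine h1.congr_deriv (Eq.symm ?_)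
    have hs2 := Real.sinh_sq (k * (y - ys))
    have hmγ : γ * m = -(3 * (β + c)) := by rw [hm]; field_simp
    have hc := hcosh_ne (k * (y - ys))
    have key := key_id (β + c) α γ m k (Real.sinh (k * (y - ys))) (Real.cosh (k * (y - ys)))
      hαne hγ hc hs2 hk2 hmγ
    simp only [hFdef]
    rw [key]
    norm_num
  -- bounds on the four functions
  have habs_sinh : ∀ x : ℝ, |Real.sinh x| ≤ Real.cosh x := by
    intro x
    have h := Real.sinh_sq x
    have h2 := Real.cosh_pos x
    rw [abs_le]
    constructor <;> nlinarith
  have hφabs : Tendsto (fun y => |φ y|) (cocompact ℝ) (nhds 0) := by simpa using hφco.abs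
  have hψabs : Tendsto (fun y => |ψ y|) (cocompact ℝ) (nhds 0) := by simpa using hψco.abs
  obtain ⟨yM, hyM⟩ := (hφcont.abs.max continuous_const).exists_forall_ge' 0
    ((hφabs.eventually_lt_const one_pos).mono fun x hx =>
      max_le (hx.le.trans (le_max_right _ _)) (le_max_right _ _))
  obtain ⟨yN, hyN⟩ := (hψcont.abs.max continuous_const).exists_forall_ge' 0
    ((hψabs.eventually_lt_const one_pos).mono fun x hx =>
      max_le (hx.le.trans (le_max_right _ _)) (le_max_right _ _))
  set Bφ : ℝ := max |φ yM| 1 with hBφdef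
  set Bψ : ℝ := max |ψ yN| 1 with hBψdef
  have hBφ : ∀ y, |φ y| ≤ Bφ := fun y => le_trans (le_max_left _ _) (hyM y)
  have hBψ : ∀ y, |ψ y| ≤ Bψ := fun y => le_trans (le_max_left _ _) (hyN y)
  set R : ℝ := max (max Bφ Bψ) (max |m| (2 * |m| * k)) with hRdef
  have hRφ : ∀ y, |φ y| ≤ R := fun y =>
    le_trans (hBφ y) (le_trans (le_max_left _ _) (le_max_left _ _))
  have hRψ : ∀ y, |ψ y| ≤ R := fun y =>
    le_trans (hBψ y) (le_trans (le_max_right _ _) (le_max_left _ _))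
  have hR0 : 0 ≤ R := le_trans (abs_nonneg (φ 0)) (hRφ 0)
  have hRF : ∀ y, |F y| ≤ R := by
    intro y
    have h1 : |(Real.cosh (k * (y - ys)) ^ 2)⁻¹| ≤ 1 := by
      rw [abs_inv, abs_pow, abs_of_pos (Real.cosh_pos _)]
      apply inv_le_one_of_one_le₀
      nlinarith [Real.one_le_cosh (k * (y - ys))]
    have h2 : |F y| ≤ |m| * 1 := by
      simp only [hFdef]
      rw [abs_mul]
      exact mul_le_mul_of_nonneg_left h1 (abs_nonneg m)
    calc |F y| ≤ |m| * 1 := h2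
      _ = |m| := mul_one _
      _ ≤ R := le_trans (le_max_left _ _) (le_max_right _ _)
  have hRG : ∀ y, |G y| ≤ R := by
    intro y
    have hc1 := Real.one_le_cosh (k * (y - ys))
    have hc0 := Real.cosh_pos (k * (y - ys))
    have h1 : |Real.sinh (k * (y - ys)) * (Real.cosh (k * (y - ys)) ^ 3)⁻¹| ≤ 1 := by
      rw [abs_mul, abs_inv, abs_pow, abs_of_pos hc0, ← div_eq_mul_inv,
        div_le_one (by positivity)]
      calc |Real.sinh (k * (y - ys))| ≤ Real.cosh (k * (y - ys)) := habs_sinh _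
        _ ≤ Real.cosh (k * (y - ys)) ^ 3 := by nlinarith [sq_nonneg (Real.cosh (k * (y - ys)) - 1), sq_nonneg (Real.cosh (k * (y - ys)) + 1)]
    have h2 : |G y| ≤ |(-(2 * m * k))| * 1 := by
      simp only [hGdef]
      rw [abs_mul]
      exact mul_le_mul_of_nonneg_left h1 (abs_nonneg _)
    have h3 : |(-(2 * m * k))| = 2 * |m| * k := by
      rw [abs_neg, abs_mul, abs_mul, abs_two, abs_of_pos hk_pos]
    calc |G y| ≤ |(-(2 * m * k))| * 1 := h2
      _ = 2 * |m| * k := by rw [h3, mul_one]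
      _ ≤ R := le_trans (le_max_right _ _) (le_max_right _ _)
  -- the vector field and its Lipschitz property
  set v : ℝ → ℝ × ℝ → ℝ × ℝ :=
    fun _ p => (p.2, ((β + c) * p.1 + γ / 2 * p.1 ^ 2) / α) with hvdef
  have hlip : ∀ t : ℝ, LipschitzOnWith (1 + ((β + c) + |γ| * R) / α).toNNReal (v t)
      (closedBall (0 : ℝ × ℝ) R) :=
    fun _ => lip_aux α (β + c) γ R hα hβc hR0
  -- continuity of the explicit solution
  have hFcont : Continuous F := continuous_iff_continuousAt.mpr fun y => (hF' y).continuousAt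
  have hGcont : Continuous G := continuous_iff_continuousAt.mpr fun y => (hG' y).continuousAt
  -- initial condition
  have hinit : (φ ys, ψ ys) = (F ys, G ys) := by
    simp only [hFdef, hGdef]
    rw [hφs, hψs]
    norm_num
  -- uniqueness of solutions
  have huniq : ∀ y, φ y = F y := by
    intro y
    have hmem1 : ∀ t : ℝ, (φ t, ψ t) ∈ closedBall (0 : ℝ × ℝ) R := by
      intro t
      rw [mem_closedBall_zero_iff, Prod.norm_def]
      simp only [Real.norm_eq_abs]
      exact max_le (hRφ t) (hRψ t)
    have hmem2 : ∀ t : ℝ, (F t, G t) ∈ closedBall (0 : ℝ × ℝ) R := by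
      intro t
      rw [mem_closedBall_zero_iff, Prod.norm_def]
      simp only [Real.norm_eq_abs]
      exact max_le (hRF t) (hRG t)
    have hD1 : ∀ t : ℝ, HasDerivAt (fun t => (φ t, ψ t)) (v t (φ t, ψ t)) t :=
      fun t => (hφ t).prodMk (hψ t)
    have hD2 : ∀ t : ℝ, HasDerivAt (fun t => (F t, G t)) (v t (F t, G t)) t :=
      fun t => (hF' t).prodMk (hG' t)
    have hmin := min_le_right y ys
    have hmin' := min_le_left y ys
    have hmax := le_max_right y ys
    have hmax' := le_max_left y ys
    have hts : ys ∈ Set.Ioo (min y ys - 1) (max y ys + 1) :=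
      ⟨by linarith, by linarith⟩
    have heq := ODE_solution_unique_of_mem_Icc (fun t _ => hlip t) hts
      ((hφcont.prodMk hψcont).continuousOn)
      (fun t _ => hD1 t) (fun t _ => hmem1 t)
      ((hFcont.prodMk hGcont).continuousOn)
      (fun t _ => hD2 t) (fun t _ => hmem2 t)
      hinit
    have hy : y ∈ Set.Icc (min y ys - 1) (max y ys + 1) :=
      ⟨by linarith, by linarith⟩
    exact congrArg Prod.fst (heq hy)
  -- conclusion
  refine ⟨ys, fun y => ?_⟩
  rw [huniq y]
  simp only [hFdef, sech]
  rw [show (1 / 2) * Real.sqrt ((β + c) / α) * (y - ys) = k * (y - ys) by rw [hk]; ring]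
  rw [one_div, inv_pow]
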